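/- Suppose u and q_ℓ have the same parity and 2k = q_ℓ t + u where t ∈ ℕ (with t odd if u is odd). Then √D = [k; \overline{u,…,u,2k}] with D = k² + t q_{ℓ−1} + 1 = t² q_ℓ²/4 + t (u q_ℓ + 2 q_{ℓ−1})/2 + u²/4 + 1. -/

import Mathlib

/-- Denominators of the complete quotients of `√D`; `lp = ℓ + 1`. -/
def stmtC (t lp : ℕ) (Q : ℕ → ℕ) (i : ℕ) : ℤ := (t : ℤ) * ((Q i : ℤ) * (Q (lp - i) : ℤ)) + 1

/-- Numerator shifts of the complete quotients of `√D`; `lp = ℓ + 1`. -/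
def stmtP (u k t lp : ℕ) (Q : ℕ → ℕ) : ℕ → ℤ
  | 0 => (k : ℤ)
  | j + 1 => (u : ℤ) * stmtC t lp Q (j + 1) - stmtP u k t lp Q j

/-- The numerator shift of the `n`-th state of the continued fraction algorithm. -/
def stmtPP (u k t lp : ℕ) (Q : ℕ → ℕ) (n : ℕ) : ℤ :=
  if n = 0 then 0 else stmtP u k t lp Q ((n - 1) % lp)

/-- The denominator of the `n`-th state of the continued fraction algorithm. -/
def stmtCC (t lp : ℕ) (Q : ℕ → ℕ) (n : ℕ) : ℤ :=
  if n = 0 then 1 else stmtC t lp Q ((n - 1) % lp + 1)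

/-- The integer part of the `n`-th state of the continued fraction algorithm. -/
def stmtA (u k lp : ℕ) (n : ℕ) : ℤ :=
  if n = 0 then (k : ℤ) else if (n - 1) % lp + 1 = lp then 2 * (k : ℤ) else (u : ℤ)

set_option maxHeartbeats 2000000 in
/-- If `u` and `q_ℓ` have the same parity and `2k = q_ℓ t + u` (with `t` odd if `u` is
odd), then `√D = [k; \overline{u,…,u,2k}]` where
`D = k² + t q_{ℓ-1} + 1 = t² q_ℓ²/4 + t(u q_ℓ + 2 q_{ℓ-1})/2 + u²/4 + 1`.
Here `Q n = q_{n-1}`. -/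
theorem stmt12 (u ℓ t k : ℕ) (hu : 0 < u) (hℓ : 1 ≤ ℓ) (ht : 1 ≤ t)
    (Q : ℕ → ℕ) (h0 : Q 0 = 0) (h1 : Q 1 = 1)
    (hrec : ∀ n, Q (n + 2) = u * Q (n + 1) + Q n)
    (hpar : u % 2 = Q (ℓ + 1) % 2)
    (htodd : Odd u → Odd t)
    (hk : 2 * k = Q (ℓ + 1) * t + u)
    (D : ℕ) (hD : D = k ^ 2 + t * Q ℓ + 1) :
    ((GenContFract.of (Real.sqrt D)).h = (k : ℝ) ∧
      ∀ n : ℕ, (GenContFract.of (Real.sqrt D)).partDens.get? n =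
        some (if n % (ℓ + 1) = ℓ then (2 * k : ℝ) else (u : ℝ))) ∧
    (D : ℚ) = (t : ℚ) ^ 2 * (Q (ℓ + 1) : ℚ) ^ 2 / 4 +
        (t : ℚ) * ((u : ℚ) * Q (ℓ + 1) + 2 * Q ℓ) / 2 + (u : ℚ) ^ 2 / 4 + 1 := by
  -- basic facts about Q
  have hqpos : ∀ n, 1 ≤ Q (n + 1) := by
    intro n
    induction n with
    | zero => simpa using h1.ge
    | succ n ih => rw [hrec]; nlinarith only [ih, hu]
  have hmono : ∀ n, Q n ≤ Q (n + 1) := by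
    intro n
    match n with
    | 0 => omega
    | n + 1 => rw [hrec]; nlinarith only [hqpos n, hu]
  have conv : ∀ m n, Q (m + n + 1) = Q (m + 1) * Q (n + 1) + Q m * Q n := by
    intro m
    induction m using Nat.twoStepInduction with
    | zero => intro n; simp [h0, h1]
    | one =>
      intro n
      have h2 : Q 2 = u := by rw [hrec 0, h0, h1]; ring
      rw [show 1 + n + 1 = n + 2 by omega, hrec, h2, h1]; ring
    | more m ih1 ih2 =>
      intro n
      have e : m + 2 + n + 1 = (m + n + 1) + 2 := by omega
      rw [e, hrec, ih1, show m + n + 1 + 1 = (m + 1) + n + 1 by omega, ih2,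
        show m + 2 + 1 = (m + 1) + 2 by omega, hrec (m + 1), hrec m]
      ring
  -- basic facts about k and D
  have hkpos : 1 ≤ k := by nlinarith only [hqpos ℓ, hk, ht, hu]
  have hDk : k ^ 2 < D := by omega
  have hDk2 : D < (k + 1) ^ 2 := by nlinarith only [hmono ℓ, hD, hk, hu, ht]
  have hDpos : 0 < D := by omega
  have hnsq : ¬ IsSquare D := by
    rintro ⟨r, hr⟩
    have h1 : k < r := by nlinarith only [hr, hDk]
    have h2 : r < k + 1 := by nlinarith only [hr, hDk2]
    omega
  -- the second assertion (the rational identity)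
  have goal2 : (D : ℚ) = (t : ℚ) ^ 2 * (Q (ℓ + 1) : ℚ) ^ 2 / 4 +
      (t : ℚ) * ((u : ℚ) * Q (ℓ + 1) + 2 * Q ℓ) / 2 + (u : ℚ) ^ 2 / 4 + 1 := by
    have hkq : 2 * (k : ℚ) = (Q (ℓ + 1) : ℚ) * t + u := by exact_mod_cast hk
    have hDq : (D : ℚ) = (k : ℚ) ^ 2 + (t : ℚ) * (Q ℓ : ℚ) + 1 := by exact_mod_cast hD
    rw [hDq]
    have h4 : (4 : ℚ) * (k : ℚ) ^ 2 = ((Q (ℓ + 1) : ℚ) * t + u) ^ 2 := by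
      rw [← hkq]; ring
    field_simp
    linear_combination 2 * h4
  refine ⟨?_, goal2⟩
  obtain ⟨s, hsdef⟩ : ∃ s : ℝ, s = Real.sqrt D := ⟨_, rfl⟩
  rw [← hsdef]
  set C : ℕ → ℤ := stmtC t (ℓ + 1) Q with hCdef
  set f : ℕ → ℤ := stmtP u k t (ℓ + 1) Q with hfdef
  set pp : ℕ → ℤ := stmtPP u k t (ℓ + 1) Q with hppdef
  set cc : ℕ → ℤ := stmtCC t (ℓ + 1) Q with hccdef
  set aa : ℕ → ℤ := stmtA u k (ℓ + 1) with haadef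
  -- facts about C and f
  have hCval : ∀ i, C i = (t : ℤ) * ((Q i : ℤ) * (Q (ℓ + 1 - i) : ℤ)) + 1 := fun i => rfl
  have hCpos : ∀ i, 0 < C i := by
    intro i; rw [hCval]; positivity
  have hC0 : C 0 = 1 := by rw [hCval, h0]; push_cast; ring
  have hCl1 : C (ℓ + 1) = 1 := by rw [hCval]; simp [h0]
  have hf0 : f 0 = (k : ℤ) := rfl
  have hfs : ∀ j, f (j + 1) = (u : ℤ) * C (j + 1) - f j := fun j => rfl
  -- unfolding lemmas for the state functions
  have hpp0 : pp 0 = 0 := rfl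
  have hcc0 : cc 0 = 1 := rfl
  have haa0 : aa 0 = (k : ℤ) := rfl
  have hppS : ∀ n, pp (n + 1) = f (n % (ℓ + 1)) := by
    intro n; simp [hppdef, stmtPP, hfdef]
  have hccS : ∀ n, cc (n + 1) = C (n % (ℓ + 1) + 1) := by
    intro n; simp [hccdef, stmtCC, hCdef]
  have haaS : ∀ n, aa (n + 1) = if n % (ℓ + 1) = ℓ then (2 * k : ℤ) else (u : ℤ) := by
    intro n
    by_cases hcond : n % (ℓ + 1) = ℓ
    · simp [haadef, stmtA, hcond]
    · simp [haadef, stmtA, hcond, show ¬(n % (ℓ + 1) + 1 = ℓ + 1) by omega]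
  clear_value C f pp cc aa
  have hirr : Irrational s := by rw [hsdef]; exact (irrational_sqrt_natCast_iff).mpr hnsq
  have hs2 : s ^ 2 = (D : ℝ) := by rw [hsdef]; exact Real.sq_sqrt (by positivity)
  have hspos : 0 < s := by
    rw [hsdef]; exact Real.sqrt_pos.mpr (by exact_mod_cast hDpos)
  have hks : (k : ℝ) < s := by
    have h : ((k : ℝ)) ^ 2 < s ^ 2 := by rw [hs2]; exact_mod_cast hDk
    exact lt_of_pow_lt_pow_left₀ 2 hspos.le h
  have hsk1 : s < (k : ℝ) + 1 := by
    have h : s ^ 2 < ((k : ℝ) + 1) ^ 2 := by rw [hs2]; exact_mod_cast hDk2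
    exact lt_of_pow_lt_pow_left₀ 2 (by positivity) h
  have hfloor0 : ⌊s⌋ = (k : ℤ) := by
    rw [Int.floor_eq_iff]
    exact ⟨by push_cast; exact hks.le, by push_cast; exact hsk1⟩
  have hfcl : ∀ j, j ≤ ℓ →
      2 * f j = (t : ℤ) * ((Q (j + 1) : ℤ) * (Q (ℓ + 1 - j) : ℤ) - (Q j : ℤ) * (Q (ℓ - j) : ℤ))
        + u := by
    intro j
    induction j with
    | zero =>
      intro _
      rw [Nat.sub_zero, Nat.sub_zero, hf0, h1, h0]
      have hkz : (2 * k : ℤ) = (Q (ℓ + 1) : ℤ) * t + u := by exact_mod_cast hk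
      push_cast
      linarith
    | succ j ih =>
      intro hj1
      have IH := ih (by omega)
      obtain ⟨r, hr⟩ : ∃ r, ℓ = j + 1 + r := ⟨ℓ - (j + 1), by omega⟩
      have e1 : ℓ + 1 - j = r + 2 := by omega
      have e2 : ℓ - j = r + 1 := by omega
      have e3 : ℓ + 1 - (j + 1) = r + 1 := by omega
      have e4 : ℓ - (j + 1) = r := by omega
      rw [e1, e2] at IH
      rw [e3, e4, hfs j, show j + 1 + 1 = j + 2 by omega]
      have hCj : C (j + 1) = (t : ℤ) * ((Q (j + 1) : ℤ) * (Q (r + 1) : ℤ)) + 1 := by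
        rw [hCval, e3]
      rw [hCj]
      have hrj : ((Q (j + 2) : ℕ) : ℤ) = u * Q (j + 1) + Q j := by exact_mod_cast hrec j
      have hrr : ((Q (r + 2) : ℕ) : ℤ) = u * Q (r + 1) + Q r := by exact_mod_cast hrec r
      linear_combination (-1 : ℤ) * IH - (t : ℤ) * (Q (j + 1) : ℤ) * hrr -
        (t : ℤ) * (Q (r + 1) : ℤ) * hrj
  have hflk : f ℓ = (k : ℤ) := by
    have h := hfcl ℓ le_rfl
    rw [show ℓ + 1 - ℓ = 1 by omega, show ℓ - ℓ = 0 by omega, h0, h1] at h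
    have hkz : (2 * k : ℤ) = (Q (ℓ + 1) : ℤ) * t + u := by exact_mod_cast hk
    push_cast at h
    linarith
  have hfpos : ∀ j, j ≤ ℓ → 0 < f j := by
    intro j hj
    have h2f := hfcl j hj
    rw [show ℓ + 1 - j = (ℓ - j) + 1 by omega] at h2f
    have m1 : ((Q j : ℕ) : ℤ) ≤ (Q (j + 1) : ℤ) := by exact_mod_cast hmono j
    have m2 : ((Q (ℓ - j) : ℕ) : ℤ) ≤ (Q (ℓ - j + 1) : ℤ) := by exact_mod_cast hmono (ℓ - j)
    have nn1 : (0 : ℤ) ≤ (Q j : ℤ) := by positivity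
    have nn2 : (0 : ℤ) ≤ (Q (ℓ - j) : ℤ) := by positivity
    have prod : (Q j : ℤ) * (Q (ℓ - j) : ℤ) ≤ (Q (j + 1) : ℤ) * (Q (ℓ - j + 1) : ℤ) :=
      mul_le_mul m1 m2 nn2 (le_trans nn1 m1)
    have ht' : (1 : ℤ) ≤ (t : ℤ) := by exact_mod_cast ht
    have hu' : (1 : ℤ) ≤ (u : ℤ) := by exact_mod_cast hu
    have hnn : 0 ≤ (t : ℤ) * ((Q (j + 1) : ℤ) * (Q (ℓ - j + 1) : ℤ) -
        (Q j : ℤ) * (Q (ℓ - j) : ℤ)) :=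
      mul_nonneg (by positivity) (by linarith)
    linarith only [h2f, hnn, hu']
  have hDz4 : 4 * (D : ℤ) = ((t : ℤ) * (Q (ℓ + 1) : ℤ) + u) ^ 2 + 4 * t * (Q ℓ : ℤ) + 4 := by
    have hDz : (D : ℤ) = (k : ℤ) ^ 2 + t * (Q ℓ : ℤ) + 1 := by exact_mod_cast hD
    have hkz : (2 * k : ℤ) = (Q (ℓ + 1) : ℤ) * t + u := by exact_mod_cast hk
    linear_combination 4 * hDz + (2 * (k : ℤ) + (Q (ℓ + 1) : ℤ) * t + u) * hkz
  have hId : ∀ j, j ≤ ℓ → C j * C (j + 1) = (D : ℤ) - f j ^ 2 := by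
    intro j hj
    rcases j with _ | m
    · rw [hC0, hf0, one_mul, hCval 1, show ℓ + 1 - 1 = ℓ by omega, h1]
      have hDz : (D : ℤ) = (k : ℤ) ^ 2 + t * (Q ℓ : ℤ) + 1 := by exact_mod_cast hD
      push_cast
      linarith
    · rw [show m + 1 + 1 = m + 2 by omega]
      obtain ⟨r, hr⟩ : ∃ r, ℓ = m + 1 + r := ⟨ℓ - (m + 1), by omega⟩
      have eA : ℓ + 1 - (m + 1) = r + 1 := by omega
      have eB : ℓ + 1 - (m + 2) = r := by omega
      have hCm1 : C (m + 1) = (t : ℤ) * ((Q (m + 1) : ℤ) * (Q (r + 1) : ℤ)) + 1 := by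
        rw [hCval, eA]
      have hCm2 : C (m + 2) = (t : ℤ) * ((Q (m + 2) : ℤ) * (Q r : ℤ)) + 1 := by
        rw [hCval, eB]
      have h2f := hfcl (m + 1) hj
      rw [eA, show ℓ - (m + 1) = r by omega, show m + 1 + 1 = m + 2 by omega] at h2f
      have c1 : ((Q (ℓ + 1) : ℕ) : ℤ) =
          (Q (m + 2) : ℤ) * (Q (r + 1) : ℤ) + (Q (m + 1) : ℤ) * (Q r : ℤ) := by
        have hc := conv (m + 1) r
        rw [show m + 1 + r + 1 = ℓ + 1 by omega, show m + 1 + 1 = m + 2 by omega] at hc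
        exact_mod_cast hc
      have c2 : ((Q ℓ : ℕ) : ℤ) = (Q (m + 1) : ℤ) * (Q (r + 1) : ℤ) + (Q m : ℤ) * (Q r : ℤ) := by
        have hc := conv m r
        rw [show m + r + 1 = ℓ by omega] at hc
        exact_mod_cast hc
      have hrm : ((Q (m + 2) : ℕ) : ℤ) = u * Q (m + 1) + Q m := by exact_mod_cast hrec m
      rw [hCm1, hCm2]
      have goal4 : 4 * (((t : ℤ) * ((Q (m + 1) : ℤ) * (Q (r + 1) : ℤ)) + 1) *
          ((t : ℤ) * ((Q (m + 2) : ℤ) * (Q r : ℤ)) + 1)) =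
          4 * (D : ℤ) - (2 * f (m + 1)) ^ 2 := by
        linear_combination (-1 : ℤ) * hDz4 +
          (2 * f (m + 1) + ((t : ℤ) * ((Q (m + 2) : ℤ) * (Q (r + 1) : ℤ) -
            (Q (m + 1) : ℤ) * (Q r : ℤ)) + u)) * h2f -
          ((t : ℤ) ^ 2 * ((Q (ℓ + 1) : ℤ) + (Q (m + 2) : ℤ) * (Q (r + 1) : ℤ) +
            (Q (m + 1) : ℤ) * (Q r : ℤ)) + 2 * (u : ℤ) * t) * c1 -
          4 * (t : ℤ) * c2 + 4 * (t : ℤ) * (Q r : ℤ) * hrm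
      linarith only [goal4]
  have hgap : ∀ j, j + 1 ≤ ℓ → C (j + 2) < 2 * f (j + 1) + C (j + 1) := by
    intro j hj1
    obtain ⟨r, hr⟩ : ∃ r, ℓ = j + 1 + r := ⟨ℓ - (j + 1), by omega⟩
    have eA : ℓ + 1 - (j + 1) = r + 1 := by omega
    have eB : ℓ + 1 - (j + 2) = r := by omega
    have h2f := hfcl (j + 1) hj1
    rw [eA, show ℓ - (j + 1) = r by omega, show j + 1 + 1 = j + 2 by omega] at h2f
    have hCa : C (j + 1) = (t : ℤ) * ((Q (j + 1) : ℤ) * (Q (r + 1) : ℤ)) + 1 := by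
      rw [hCval, eA]
    have hCb : C (j + 2) = (t : ℤ) * ((Q (j + 2) : ℤ) * (Q r : ℤ)) + 1 := by
      rw [hCval, eB]
    have m2 : ((Q r : ℕ) : ℤ) ≤ (Q (r + 1) : ℤ) := by exact_mod_cast hmono r
    have hu' : (1 : ℤ) ≤ (u : ℤ) := by exact_mod_cast hu
    have key : 0 ≤ (t : ℤ) * (((Q (j + 2) : ℤ) + (Q (j + 1) : ℤ)) *
        ((Q (r + 1) : ℤ) - (Q r : ℤ))) :=
      mul_nonneg (by positivity) (mul_nonneg (by positivity) (by linarith))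
    rw [hCa, hCb]
    nlinarith only [key, h2f, hu']
  -- bounds on `f i` against `s`, for `1 ≤ i ≤ ℓ`
  have hBlt : ∀ i, 1 ≤ i → i ≤ ℓ → ((f i : ℝ) < s ∧ s < (f i : ℝ) + (C i : ℝ)) := by
    intro i hi1 hil
    have hsq : f i ^ 2 < (D : ℤ) := by
      have h := hId i hil
      nlinarith only [h, hCpos i, hCpos (i + 1)]
    have hfposi := hfpos i hil
    constructor
    · have hx : ((f i : ℝ)) ^ 2 < s ^ 2 := by rw [hs2]; exact_mod_cast hsq
      exact lt_of_pow_lt_pow_left₀ 2 hspos.le hx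
    · obtain ⟨j, rfl⟩ : ∃ j, i = j + 1 := ⟨i - 1, by omega⟩
      have hg := hgap j hil
      have h := hId (j + 1) hil
      have h2 : (D : ℤ) < (f (j + 1) + C (j + 1)) ^ 2 := by
        nlinarith only [h, hg, hCpos (j + 1)]
      have h3 : s ^ 2 < ((f (j + 1) : ℝ) + (C (j + 1) : ℝ)) ^ 2 := by
        rw [hs2]
        exact_mod_cast h2
      have h4 : (0 : ℝ) < (f (j + 1) : ℝ) + (C (j + 1) : ℝ) := by
        have h5 : (0 : ℤ) < f (j + 1) + C (j + 1) := by
          have := hfpos (j + 1) hil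
          have := hCpos (j + 1)
          omega
        exact_mod_cast h5
      have := lt_of_pow_lt_pow_left₀ 2 h4.le h3
      push_cast at this ⊢
      linarith
  -- the generic inversion step
  have hstep : ∀ p c a c' : ℤ, 0 < c → 0 < c' → c * c' = (D : ℤ) - (a * c - p) ^ 2 →
      (((p : ℝ) + s) / (c : ℝ) - (a : ℝ))⁻¹ = (((a * c - p : ℤ) : ℝ) + s) / (c' : ℝ) := by
    intro p c a c' hc hc' hcc
    have hsqZ : (a * c - p : ℤ) ^ 2 < (D : ℤ) := by nlinarith only [hcc, hc, hc']
    have hsqlt : (((a * c - p : ℤ) : ℝ)) ^ 2 < s ^ 2 := by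
      rw [hs2]; exact_mod_cast hsqZ
    have habs : |((a * c - p : ℤ) : ℝ)| < s := by
      refine lt_of_pow_lt_pow_left₀ 2 hspos.le ?_
      rw [sq_abs]
      exact hsqlt
    obtain ⟨hgt, hlt⟩ := abs_lt.mp habs
    have hcR : (0 : ℝ) < (c : ℝ) := by exact_mod_cast hc
    have hcR' : (0 : ℝ) < (c' : ℝ) := by exact_mod_cast hc'
    have hsub : s - ((a * c - p : ℤ) : ℝ) ≠ 0 := by
      have : (0 : ℝ) < s - ((a * c - p : ℤ) : ℝ) := by linarith
      linarith
    have e : ((p : ℝ) + s) / (c : ℝ) - (a : ℝ) = (s - ((a * c - p : ℤ) : ℝ)) / (c : ℝ) := by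
      field_simp
      push_cast
      ring
    rw [e, inv_div, div_eq_div_iff hsub (by positivity)]
    have hccR : (c : ℝ) * (c' : ℝ) = (D : ℝ) - (((a * c - p : ℤ) : ℝ)) ^ 2 := by
      exact_mod_cast hcc
    linear_combination hccR - hs2
  -- the generic floor computation
  have hfloorState : ∀ j, j ≤ ℓ →
      ⌊((f j : ℝ) + s) / (C (j + 1) : ℝ)⌋ = if j = ℓ then (2 * k : ℤ) else (u : ℤ) := by
    intro j hj
    by_cases hje : j = ℓ
    · subst hje
      rw [if_pos rfl, hflk, hCl1]
      rw [show ((1 : ℤ) : ℝ) = 1 by norm_num, div_one, Int.floor_intCast_add, hfloor0]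
      ring
    · rw [if_neg hje]
      have hj1 : j + 1 ≤ ℓ := by omega
      obtain ⟨hlt1, hlt2⟩ := hBlt (j + 1) (by omega) hj1
      have hCpR : (0 : ℝ) < (C (j + 1) : ℝ) := by exact_mod_cast hCpos (j + 1)
      have he : ((f (j + 1) : ℝ)) = (u : ℝ) * (C (j + 1) : ℝ) - (f j : ℝ) := by
        exact_mod_cast hfs j
      rw [Int.floor_eq_iff]
      constructor
      · rw [le_div_iff₀ hCpR]
        push_cast
        linarith
      · rw [div_lt_iff₀ hCpR]
        push_cast
        push_cast at he hlt2
        linarith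
  have hccpos : ∀ n, 0 < cc n := by
    intro n
    match n with
    | 0 => norm_num [hcc0]
    | n + 1 => rw [hccS]; exact hCpos _
  -- transition identities
  have trans1 : ∀ n, aa n * cc n - pp n = pp (n + 1) := by
    intro n
    match n with
    | 0 => rw [hpp0, hcc0, haa0, hppS, Nat.zero_mod, hf0]; ring
    | m + 1 =>
      have hjlt : m % (ℓ + 1) < ℓ + 1 := Nat.mod_lt _ (by omega)
      by_cases hcond : m % (ℓ + 1) = ℓ
      · have hm2 : (m + 1) % (ℓ + 1) = 0 := by
          rw [Nat.add_mod, hcond, Nat.mod_eq_of_lt (show 1 < ℓ + 1 by omega)]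
          simp
        rw [hppS, hccS, haaS, hppS, hcond, hm2, if_pos rfl, hCl1, hflk, hf0]
        ring
      · have hm2 : (m + 1) % (ℓ + 1) = m % (ℓ + 1) + 1 := by
          rw [Nat.add_mod, Nat.mod_eq_of_lt (show 1 < ℓ + 1 by omega),
            Nat.mod_eq_of_lt (by omega)]
        rw [hppS, hccS, haaS, hppS, hm2, if_neg hcond, hfs]
  have trans2 : ∀ n, cc n * cc (n + 1) = (D : ℤ) - pp (n + 1) ^ 2 := by
    intro n
    match n with
    | 0 =>
      rw [hcc0, hccS, hppS, Nat.zero_mod, hf0]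
      have h := hId 0 (by omega)
      rw [hC0, hf0] at h
      linarith
    | m + 1 =>
      by_cases hcond : m % (ℓ + 1) = ℓ
      · have hm2 : (m + 1) % (ℓ + 1) = 0 := by
          rw [Nat.add_mod, hcond, Nat.mod_eq_of_lt (show 1 < ℓ + 1 by omega)]
          simp
        rw [hccS, hccS, hppS, hcond, hm2, hCl1, hf0]
        have h := hId 0 (by omega)
        rw [hC0, hf0] at h
        linarith
      · have hjlt : m % (ℓ + 1) < ℓ + 1 := Nat.mod_lt _ (by omega)
        have hm2 : (m + 1) % (ℓ + 1) = m % (ℓ + 1) + 1 := by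
          rw [Nat.add_mod, Nat.mod_eq_of_lt (show 1 < ℓ + 1 by omega),
            Nat.mod_eq_of_lt (by omega)]
        rw [hccS, hccS, hppS, hm2]
        exact hId (m % (ℓ + 1) + 1) (by omega)
  -- the main invariant
  have main : ∀ n : ℕ, GenContFract.IntFractPair.stream s n =
      some ⟨aa n, ((pp n : ℝ) + s) / (cc n : ℝ) - (aa n : ℝ)⟩ := by
    intro n
    induction n with
    | zero =>
      rw [GenContFract.IntFractPair.stream_zero, hpp0, hcc0, haa0]
      simp only [Option.some.injEq]
      unfold GenContFract.IntFractPair.of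
      rw [GenContFract.IntFractPair.mk.injEq]
      refine ⟨hfloor0, ?_⟩
      rw [← Int.self_sub_floor, hfloor0]
      push_cast
      ring
    | succ n ih =>
      have hccposn := hccpos n
      have hx : Irrational (((pp n : ℝ) + s) / (cc n : ℝ)) := by
        have h1 : Irrational ((pp n : ℝ) + s) := hirr.intCast_add (pp n)
        exact h1.div_intCast (by omega)
      have hfr : Irrational (((pp n : ℝ) + s) / (cc n : ℝ) - (aa n : ℝ)) := hx.sub_intCast (aa n)
      have hfrne : (((pp n : ℝ) + s) / (cc n : ℝ) - (aa n : ℝ)) ≠ 0 := by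
        intro hh
        exact hfr.ne_int 0 (by rw [hh]; simp)
      have hnext := GenContFract.IntFractPair.stream_succ_of_some ih hfrne
      rw [hnext]
      have hinv : (((pp n : ℝ) + s) / (cc n : ℝ) - (aa n : ℝ))⁻¹ =
          ((pp (n + 1) : ℝ) + s) / (cc (n + 1) : ℝ) := by
        have h := hstep (pp n) (cc n) (aa n) (cc (n + 1)) hccposn (hccpos (n + 1))
          (by rw [trans1]; exact trans2 n)
        rw [trans1] at h
        exact h
      have hfl' : ⌊((pp (n + 1) : ℝ) + s) / (cc (n + 1) : ℝ)⌋ = aa (n + 1) := by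
        rw [hppS, hccS, haaS]
        exact hfloorState (n % (ℓ + 1)) (by have := Nat.mod_lt n (show 0 < ℓ + 1 by omega); omega)
      rw [hinv]
      simp only [Option.some.injEq]
      unfold GenContFract.IntFractPair.of
      rw [GenContFract.IntFractPair.mk.injEq]
      refine ⟨hfl', ?_⟩
      rw [← Int.self_sub_floor, hfl']
  constructor
  · rw [GenContFract.of_h_eq_floor, hfloor0]
    push_cast
    ring
  · intro n
    have h2 := GenContFract.get?_of_eq_some_of_succ_get?_intFractPair_stream (main (n + 1))
    rw [GenContFract.partDens, Stream'.Seq.map_get?, h2]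
    simp only [Option.map_some]
    rw [haaS]
    by_cases hcond : n % (ℓ + 1) = ℓ
    · rw [if_pos hcond, if_pos hcond]
      push_cast
      norm_num
    · rw [if_neg hcond, if_neg hcond]
      norm_num
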